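/- In the construction of Lemma 'remove pathologies': let A ⊆ B be finite L_{rs}-structures. For each relation ā = (a₁,...,a_{rs}) ∈ R^B \ R^A introduce two new points x_ā, y_ā. In structure C the relations on the new points are R^C_ā = {(a₁,...,a_{rs-2},x_ā,y_ā), (a₃,...,a_{rs},y_ā,x_ā)}; in structure D they are R^D_ā = {(a₁,...,a_{rs-1},x_ā), (a₂,...,a_{rs},y_ā), (a₁,a₃,...,a_{rs-2},a_{rs},x_ā,y_ā)}. Writing S_ā = {a₁,...,a_{rs}, x_ā, y_ā}, prove: for any X ⊆ C (= universe of D) closed in C, δ_C(X) = |X \ A| - 3·|{ā : S_ā ⊆ X}| + δ_A(X ∩ A) = δ_D(X), hence X closed in C implies X closed in D and conversely, so the pregeometries of C and D coincide. -/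
import Mathlib


set_option maxHeartbeats 2000000

/-- The computation in Lemma "remove pathologies": for `A ⊆ B` finite `L_{rs}`-structures
(arity `m = rs`), new points `x_ā, y_ā` for each `ā ∈ R^B \ R^A`, the structures `C` and
`D` with the indicated relation blocks, and any `X` such that for every `ā`,
`S_ā ⊆ X ↔ |S_ā ∩ X| ≥ m - 1`, one has
`δ_C(X) = |X \ A| - 3·|{ā : S_ā ⊆ X}| + δ_A(X ∩ A) = δ_D(X)`. -/
theorem stmt_14 {α : Type*} [DecidableEq α] (m : ℕ) (hm : 4 ≤ m)
    (A B : Finset α) (hAB : A ⊆ B)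
    (RA RB : Finset (Fin m → α)) (hRAB : RA ⊆ RB)
    (hRAmem : ∀ t ∈ RA, ∀ i, t i ∈ A)
    (hRBmem : ∀ t ∈ RB, ∀ i, t i ∈ B)
    (hinj : ∀ t ∈ RB \ RA, Function.Injective t)
    (x y : (Fin m → α) → α)
    (hfresh : ∀ t ∈ RB \ RA, x t ∉ B ∧ y t ∉ B ∧ x t ≠ y t)
    (hpair : ∀ t ∈ RB \ RA, ∀ t' ∈ RB \ RA, t ≠ t' →
      x t ≠ x t' ∧ x t ≠ y t' ∧ y t ≠ x t' ∧ y t ≠ y t')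
    (c1 c2 d1 d2 d3 : (Fin m → α) → (Fin m → α))
    -- `c1 ā = (a₁, …, a_{m-2}, x_ā, y_ā)`
    (hc1 : ∀ t (i : Fin m), c1 t i =
      if (i : ℕ) < m - 2 then t i else if (i : ℕ) = m - 2 then x t else y t)
    -- `c2 ā = (a₃, …, a_m, y_ā, x_ā)`
    (hc2 : ∀ t (i : Fin m), c2 t i =
      if h : (i : ℕ) + 2 < m then t ⟨(i : ℕ) + 2, h⟩
      else if (i : ℕ) = m - 2 then y t else x t)
    -- `d1 ā = (a₁, …, a_{m-1}, x_ā)`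
    (hd1 : ∀ t (i : Fin m), d1 t i = if (i : ℕ) < m - 1 then t i else x t)
    -- `d2 ā = (a₂, …, a_m, y_ā)`
    (hd2 : ∀ t (i : Fin m), d2 t i =
      if h : (i : ℕ) + 1 < m then t ⟨(i : ℕ) + 1, h⟩ else y t)
    -- `d3 ā = (a₁, a₃, …, a_{m-2}, a_m, x_ā, y_ā)`
    (hd3 : ∀ t (i : Fin m), d3 t i =
      if (i : ℕ) = 0 then t i
      else if h : (i : ℕ) < m - 3 then t ⟨(i : ℕ) + 1, by omega⟩
      else if (i : ℕ) = m - 3 then t ⟨m - 1, by omega⟩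
      else if (i : ℕ) = m - 2 then x t else y t)
    (RC RD : Finset (Fin m → α))
    (hRC : RC = RB ∪ (RB \ RA).image c1 ∪ (RB \ RA).image c2)
    (hRD : RD = RA ∪ (RB \ RA).image d1 ∪ (RB \ RA).image d2 ∪ (RB \ RA).image d3)
    -- `S ā = {a₁, …, a_m, x_ā, y_ā}`
    (S : (Fin m → α) → Finset α)
    (hS : ∀ t, S t = Finset.image t Finset.univ ∪ {x t, y t})
    (X : Finset α)
    (hXV : X ⊆ B ∪ (RB \ RA).image x ∪ (RB \ RA).image y)
    (hgood : ∀ t ∈ RB \ RA, (S t ⊆ X ↔ m - 1 ≤ (S t ∩ X).card)) :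
    (X.card : ℤ) - ((RC.filter fun u => ∀ i, u i ∈ X).card : ℤ)
        = ((X \ A).card : ℤ) - 3 * (((RB \ RA).filter fun t => S t ⊆ X).card : ℤ)
          + (((X ∩ A).card : ℤ) -
              ((RA.filter fun u => ∀ i, u i ∈ X ∩ A).card : ℤ)) ∧
    ((X \ A).card : ℤ) - 3 * (((RB \ RA).filter fun t => S t ⊆ X).card : ℤ)
          + (((X ∩ A).card : ℤ) -
              ((RA.filter fun u => ∀ i, u i ∈ X ∩ A).card : ℤ))
        = (X.card : ℤ) - ((RD.filter fun u => ∀ i, u i ∈ X).card : ℤ) := by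
  classical
  -- Basic abbreviations
  set P : (Fin m → α) → Prop := fun u => ∀ i, u i ∈ X with hP
  have hm1 : m - 1 < m := by omega
  have hm2 : m - 2 < m := by omega
  -- membership of values in S t
  have hmemS : ∀ t (k : Fin m), t k ∈ S t := by
    intro t k
    rw [hS t]
    exact Finset.mem_union_left _ (Finset.mem_image.mpr ⟨k, Finset.mem_univ k, rfl⟩)
  have hxS : ∀ t, x t ∈ S t := by
    intro t; rw [hS t]; exact Finset.mem_union_right _ (by simp)
  have hyS : ∀ t, y t ∈ S t := by
    intro t; rw [hS t]; exact Finset.mem_union_right _ (by simp)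
  -- key: any injective tuple with values in S t detects S t ⊆ X
  have key : ∀ t ∈ RB \ RA, ∀ u : Fin m → α, Function.Injective u →
      (∀ i, u i ∈ S t) → ((∀ i, u i ∈ X) ↔ S t ⊆ X) := by
    intro t ht u huinj humem
    constructor
    · intro hu
      apply (hgood t ht).mpr
      have hsub : Finset.image u Finset.univ ⊆ S t ∩ X := by
        intro a ha
        obtain ⟨i, _, rfl⟩ := Finset.mem_image.mp ha
        exact Finset.mem_inter.mpr ⟨humem i, hu i⟩
      have hcard : (Finset.image u Finset.univ).card = m := by
        rw [Finset.card_image_of_injective _ huinj, Finset.card_univ, Fintype.card_fin]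
      have := Finset.card_le_card hsub
      omega
    · intro hSX i
      exact hSX (humem i)
  -- separation
  have hsep : ∀ t ∈ RB \ RA, ∀ t' ∈ RB \ RA,
      (x t = x t' ∨ x t = y t' ∨ y t = x t' ∨ y t = y t') → t = t' := by
    intro t ht t' ht' h
    by_contra hne
    obtain ⟨h1, h2, h3, h4⟩ := hpair t ht t' ht' hne
    rcases h with h | h | h | h
    · exact h1 h
    · exact h2 h
    · exact h3 h
    · exact h4 h
  -- value facts at the last two coordinates
  have hc1x : ∀ t, c1 t ⟨m - 2, hm2⟩ = x t := by
    intro t; rw [hc1]; split_ifs with h1 h2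
    · exact absurd h1 (lt_irrefl _)
    · rfl
    · exact absurd rfl h2
  have hc1y : ∀ t, c1 t ⟨m - 1, hm1⟩ = y t := by
    intro t; rw [hc1]; split_ifs with h1 h2
    · exact absurd h1 (by simp only [Fin.val_mk]; omega)
    · exact absurd h2 (by simp only [Fin.val_mk]; omega)
    · rfl
  have hc2y : ∀ t, c2 t ⟨m - 2, hm2⟩ = y t := by
    intro t; rw [hc2]; split_ifs with h1 h2
    · exact absurd h1 (by simp only [Fin.val_mk]; omega)
    · rfl
    · exact absurd rfl h2
  have hc2x : ∀ t, c2 t ⟨m - 1, hm1⟩ = x t := by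
    intro t; rw [hc2]; split_ifs with h1 h2
    · exact absurd h1 (by simp only [Fin.val_mk]; omega)
    · exact absurd h2 (by simp only [Fin.val_mk]; omega)
    · rfl
  have hd1x : ∀ t, d1 t ⟨m - 1, hm1⟩ = x t := by
    intro t; rw [hd1]; split_ifs with h1
    · exact absurd h1 (by simp only [Fin.val_mk]; omega)
    · rfl
  have hd2y : ∀ t, d2 t ⟨m - 1, hm1⟩ = y t := by
    intro t; rw [hd2]; split_ifs with h1
    · exact absurd h1 (by simp only [Fin.val_mk]; omega)
    · rfl
  have hd2t : ∀ t, d2 t ⟨m - 2, hm2⟩ = t ⟨m - 1, hm1⟩ := by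
    intro t; rw [hd2]; split_ifs with h1
    · congr 1; exact Fin.ext (by simp only [Fin.val_mk]; omega)
    · exact absurd (by simp only [Fin.val_mk]; omega : (⟨m - 2, hm2⟩ : Fin m).val + 1 < m) h1
  have hd3x : ∀ t, d3 t ⟨m - 2, hm2⟩ = x t := by
    intro t; rw [hd3]; split_ifs with h1 h2 h3 h4
    · exact absurd h1 (by simp only [Fin.val_mk]; omega)
    · exact absurd h2 (by simp only [Fin.val_mk]; omega)
    · exact absurd h3 (by simp only [Fin.val_mk]; omega)
    · rfl
    · exact absurd rfl h4
  have hd3y : ∀ t, d3 t ⟨m - 1, hm1⟩ = y t := by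
    intro t; rw [hd3]; split_ifs with h1 h2 h3 h4
    · exact absurd h1 (by simp only [Fin.val_mk]; omega)
    · exact absurd h2 (by simp only [Fin.val_mk]; omega)
    · exact absurd h3 (by simp only [Fin.val_mk]; omega)
    · exact absurd h4 (by simp only [Fin.val_mk]; omega)
    · rfl
  -- values of generated tuples lie in S t
  have hc1S : ∀ t (i : Fin m), c1 t i ∈ S t := by
    intro t i; rw [hc1]; split_ifs
    · exact hmemS t i
    · exact hxS t
    · exact hyS t
  have hc2S : ∀ t (i : Fin m), c2 t i ∈ S t := by
    intro t i; rw [hc2]; split_ifs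
    · exact hmemS t _
    · exact hyS t
    · exact hxS t
  have hd1S : ∀ t (i : Fin m), d1 t i ∈ S t := by
    intro t i; rw [hd1]; split_ifs
    · exact hmemS t _
    · exact hxS t
  have hd2S : ∀ t (i : Fin m), d2 t i ∈ S t := by
    intro t i; rw [hd2]; split_ifs
    · exact hmemS t _
    · exact hyS t
  have hd3S : ∀ t (i : Fin m), d3 t i ∈ S t := by
    intro t i; rw [hd3]; split_ifs
    · exact hmemS t _
    · exact hmemS t _
    · exact hmemS t _
    · exact hxS t
    · exact hyS t
  have htB : ∀ t ∈ RB \ RA, ∀ i, t i ∈ B :=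
    fun t ht i => hRBmem t (Finset.mem_sdiff.mp ht).1 i
  have hne_tx : ∀ t ∈ RB \ RA, ∀ k, t k ≠ x t :=
    fun t ht k h => (hfresh t ht).1 (h ▸ htB t ht k)
  have hne_ty : ∀ t ∈ RB \ RA, ∀ k, t k ≠ y t :=
    fun t ht k h => (hfresh t ht).2.1 (h ▸ htB t ht k)
  -- injectivity of the generated tuples
  have INJ : ∀ (f : (Fin m → α) → (Fin m → α)),
      (f = c1 ∨ f = c2 ∨ f = d1 ∨ f = d2 ∨ f = d3) →
      ∀ t ∈ RB \ RA, Function.Injective (f t) := by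
    intro f hf t ht i j hij
    have hi := i.isLt; have hj := j.isLt
    have hxy := (hfresh t ht).2.2
    rcases hf with rfl | rfl | rfl | rfl | rfl
    all_goals
      first
        | rw [hc1, hc1] at hij
        | rw [hc2, hc2] at hij
        | rw [hd1, hd1] at hij
        | rw [hd2, hd2] at hij
        | rw [hd3, hd3] at hij
    all_goals
      split_ifs at hij <;>
        first
        | exact hinj t ht hij
        | exact absurd hij (hne_tx t ht _)
        | exact absurd hij.symm (hne_tx t ht _)
        | exact absurd hij (hne_ty t ht _)
        | exact absurd hij.symm (hne_ty t ht _)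
        | exact absurd hij hxy
        | exact absurd hij.symm hxy
        | exact Fin.ext (by omega)
        | (exact Fin.ext (by
            have h9 := hinj t ht hij
            rw [Fin.ext_iff] at h9
            simp only [Fin.val_mk] at h9
            omega))
  -- P-equivalences
  have hPt : ∀ t ∈ RB \ RA, (P t ↔ S t ⊆ X) :=
    fun t ht => key t ht t (hinj t ht) (hmemS t)
  have hPc1 : ∀ t ∈ RB \ RA, (P (c1 t) ↔ S t ⊆ X) :=
    fun t ht => key t ht (c1 t) (INJ c1 (by tauto) t ht) (hc1S t)
  have hPc2 : ∀ t ∈ RB \ RA, (P (c2 t) ↔ S t ⊆ X) :=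
    fun t ht => key t ht (c2 t) (INJ c2 (by tauto) t ht) (hc2S t)
  have hPd1 : ∀ t ∈ RB \ RA, (P (d1 t) ↔ S t ⊆ X) :=
    fun t ht => key t ht (d1 t) (INJ d1 (by tauto) t ht) (hd1S t)
  have hPd2 : ∀ t ∈ RB \ RA, (P (d2 t) ↔ S t ⊆ X) :=
    fun t ht => key t ht (d2 t) (INJ d2 (by tauto) t ht) (hd2S t)
  have hPd3 : ∀ t ∈ RB \ RA, (P (d3 t) ↔ S t ⊆ X) :=
    fun t ht => key t ht (d3 t) (INJ d3 (by tauto) t ht) (hd3S t)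
  -- injectivity on the index set
  have hioc1 : Set.InjOn c1 (RB \ RA : Finset (Fin m → α)) := by
    intro t ht t' ht' h
    refine hsep t (by simpa using ht) t' (by simpa using ht') (Or.inl ?_)
    rw [← hc1x t, ← hc1x t', h]
  have hioc2 : Set.InjOn c2 (RB \ RA : Finset (Fin m → α)) := by
    intro t ht t' ht' h
    refine hsep t (by simpa using ht) t' (by simpa using ht') (Or.inl ?_)
    rw [← hc2x t, ← hc2x t', h]
  have hiod1 : Set.InjOn d1 (RB \ RA : Finset (Fin m → α)) := by
    intro t ht t' ht' h
    refine hsep t (by simpa using ht) t' (by simpa using ht') (Or.inl ?_)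
    rw [← hd1x t, ← hd1x t', h]
  have hiod2 : Set.InjOn d2 (RB \ RA : Finset (Fin m → α)) := by
    intro t ht t' ht' h
    refine hsep t (by simpa using ht) t' (by simpa using ht')
      (Or.inr (Or.inr (Or.inr ?_)))
    rw [← hd2y t, ← hd2y t', h]
  have hiod3 : Set.InjOn d3 (RB \ RA : Finset (Fin m → α)) := by
    intro t ht t' ht' h
    refine hsep t (by simpa using ht) t' (by simpa using ht')
      (Or.inr (Or.inr (Or.inr ?_)))
    rw [← hd3y t, ← hd3y t', h]
  -- the generic count for an image block
  have himgcount : ∀ (f : (Fin m → α) → (Fin m → α)),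
      (∀ t ∈ RB \ RA, (P (f t) ↔ S t ⊆ X)) →
      Set.InjOn f (RB \ RA : Finset (Fin m → α)) →
      (((RB \ RA).image f).filter P).card
        = ((RB \ RA).filter fun t => S t ⊆ X).card := by
    intro f hPf hio
    rw [Finset.filter_image,
      Finset.filter_congr (fun t ht => hPf t ht)]
    exact Finset.card_image_of_injOn
      (hio.mono (Finset.coe_subset.mpr (Finset.filter_subset _ _)))
  -- count on RA
  have hRAcount : (RA.filter P).card
      = (RA.filter fun u => ∀ i, u i ∈ X ∩ A).card := by
    congr 1
    refine Finset.filter_congr (fun u hu => ?_)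
    constructor
    · intro h i; exact Finset.mem_inter.mpr ⟨h i, hRAmem u hu i⟩
    · intro h i; exact (Finset.mem_inter.mp (h i)).1
  -- count on RB
  have hRBsplit : (RB.filter P).card
      = (RA.filter fun u => ∀ i, u i ∈ X ∩ A).card
        + ((RB \ RA).filter fun t => S t ⊆ X).card := by
    have h1 : RB.filter P = RA.filter P ∪ (RB \ RA).filter P := by
      rw [← Finset.filter_union, Finset.union_sdiff_of_subset hRAB]
    rw [h1, Finset.card_union_of_disjoint
      (Finset.disjoint_sdiff.mono (Finset.filter_subset _ _) (Finset.filter_subset _ _))]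
    rw [hRAcount, Finset.filter_congr (fun t ht => hPt t ht)]
  -- disjointness of blocks
  have hdisjRBc1 : Disjoint RB ((RB \ RA).image c1) := by
    rw [Finset.disjoint_right]
    intro u hu hu'
    obtain ⟨t, ht, rfl⟩ := Finset.mem_image.mp hu
    have h0 := hRBmem _ hu' ⟨m - 2, hm2⟩
    rw [hc1x t] at h0
    exact (hfresh t ht).1 h0
  have hdisjRBc2 : Disjoint RB ((RB \ RA).image c2) := by
    rw [Finset.disjoint_right]
    intro u hu hu'
    obtain ⟨t, ht, rfl⟩ := Finset.mem_image.mp hu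
    have h0 := hRBmem _ hu' ⟨m - 2, hm2⟩
    rw [hc2y t] at h0
    exact (hfresh t ht).2.1 h0
  have hdisjc1c2 : Disjoint ((RB \ RA).image c1) ((RB \ RA).image c2) := by
    rw [Finset.disjoint_left]
    intro u hu hu'
    obtain ⟨t, ht, rfl⟩ := Finset.mem_image.mp hu
    obtain ⟨t', ht', he⟩ := Finset.mem_image.mp hu'
    have hv := congrFun he ⟨m - 1, hm1⟩
    rw [hc2x t', hc1y t] at hv
    have h2 := hsep t' ht' t ht (Or.inr (Or.inl hv))
    subst h2
    exact (hfresh t' ht').2.2 hv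
  have hdisjRAd1 : Disjoint RA ((RB \ RA).image d1) := by
    rw [Finset.disjoint_right]
    intro u hu hu'
    obtain ⟨t, ht, rfl⟩ := Finset.mem_image.mp hu
    have h0 := hRAmem _ hu' ⟨m - 1, hm1⟩
    rw [hd1x t] at h0
    exact (hfresh t ht).1 (hAB h0)
  have hdisjRAd2 : Disjoint RA ((RB \ RA).image d2) := by
    rw [Finset.disjoint_right]
    intro u hu hu'
    obtain ⟨t, ht, rfl⟩ := Finset.mem_image.mp hu
    have h0 := hRAmem _ hu' ⟨m - 1, hm1⟩
    rw [hd2y t] at h0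
    exact (hfresh t ht).2.1 (hAB h0)
  have hdisjRAd3 : Disjoint RA ((RB \ RA).image d3) := by
    rw [Finset.disjoint_right]
    intro u hu hu'
    obtain ⟨t, ht, rfl⟩ := Finset.mem_image.mp hu
    have h0 := hRAmem _ hu' ⟨m - 1, hm1⟩
    rw [hd3y t] at h0
    exact (hfresh t ht).2.1 (hAB h0)
  have hdisjd1d2 : Disjoint ((RB \ RA).image d1) ((RB \ RA).image d2) := by
    rw [Finset.disjoint_left]
    intro u hu hu'
    obtain ⟨t, ht, rfl⟩ := Finset.mem_image.mp hu
    obtain ⟨t', ht', he⟩ := Finset.mem_image.mp hu'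
    have hv := congrFun he ⟨m - 1, hm1⟩
    rw [hd2y t', hd1x t] at hv
    have h2 := hsep t ht t' ht' (Or.inr (Or.inl hv.symm))
    subst h2
    exact (hfresh t ht).2.2 hv.symm
  have hdisjd1d3 : Disjoint ((RB \ RA).image d1) ((RB \ RA).image d3) := by
    rw [Finset.disjoint_left]
    intro u hu hu'
    obtain ⟨t, ht, rfl⟩ := Finset.mem_image.mp hu
    obtain ⟨t', ht', he⟩ := Finset.mem_image.mp hu'
    have hv := congrFun he ⟨m - 1, hm1⟩
    rw [hd3y t', hd1x t] at hv
    have h2 := hsep t ht t' ht' (Or.inr (Or.inl hv.symm))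
    subst h2
    exact (hfresh t ht).2.2 hv.symm
  have hdisjd2d3 : Disjoint ((RB \ RA).image d2) ((RB \ RA).image d3) := by
    rw [Finset.disjoint_left]
    intro u hu hu'
    obtain ⟨t, ht, rfl⟩ := Finset.mem_image.mp hu
    obtain ⟨t', ht', he⟩ := Finset.mem_image.mp hu'
    have hv := congrFun he ⟨m - 2, hm2⟩
    rw [hd3x t', hd2t t] at hv
    exact (hfresh t' ht').1 (hv ▸ htB t ht ⟨m - 1, hm1⟩)
  -- total counts
  have hC : ((RC.filter P).card)
      = (RA.filter fun u => ∀ i, u i ∈ X ∩ A).card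
        + 3 * ((RB \ RA).filter fun t => S t ⊆ X).card := by
    rw [hRC, Finset.filter_union, Finset.filter_union,
      Finset.card_union_of_disjoint (by
        apply Finset.disjoint_union_left.mpr
        exact ⟨hdisjRBc2.mono (Finset.filter_subset _ _) (Finset.filter_subset _ _),
               hdisjc1c2.mono (Finset.filter_subset _ _) (Finset.filter_subset _ _)⟩),
      Finset.card_union_of_disjoint
        (hdisjRBc1.mono (Finset.filter_subset _ _) (Finset.filter_subset _ _)),
      hRBsplit, himgcount c1 hPc1 hioc1, himgcount c2 hPc2 hioc2]
    ring
  have hD : ((RD.filter P).card)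
      = (RA.filter fun u => ∀ i, u i ∈ X ∩ A).card
        + 3 * ((RB \ RA).filter fun t => S t ⊆ X).card := by
    rw [hRD, Finset.filter_union, Finset.filter_union, Finset.filter_union,
      Finset.card_union_of_disjoint (by
        apply Finset.disjoint_union_left.mpr
        refine ⟨Finset.disjoint_union_left.mpr ⟨?_, ?_⟩, ?_⟩
        · exact hdisjRAd3.mono (Finset.filter_subset _ _) (Finset.filter_subset _ _)
        · exact hdisjd1d3.mono (Finset.filter_subset _ _) (Finset.filter_subset _ _)
        · exact hdisjd2d3.mono (Finset.filter_subset _ _) (Finset.filter_subset _ _)),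
      Finset.card_union_of_disjoint (by
        apply Finset.disjoint_union_left.mpr
        exact ⟨hdisjRAd2.mono (Finset.filter_subset _ _) (Finset.filter_subset _ _),
               hdisjd1d2.mono (Finset.filter_subset _ _) (Finset.filter_subset _ _)⟩),
      Finset.card_union_of_disjoint
        (hdisjRAd1.mono (Finset.filter_subset _ _) (Finset.filter_subset _ _)),
      hRAcount, himgcount d1 hPd1 hiod1, himgcount d2 hPd2 hiod2,
      himgcount d3 hPd3 hiod3]
    ring
  have hXcard := Finset.card_sdiff_add_card_inter X A
  have e0 : ((X \ A).card : ℤ) + ((X ∩ A).card : ℤ) = (X.card : ℤ) := by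
    exact_mod_cast hXcard
  have e1 : ((RC.filter P).card : ℤ)
      = ((RA.filter fun u => ∀ i, u i ∈ X ∩ A).card : ℤ)
        + 3 * (((RB \ RA).filter fun t => S t ⊆ X).card : ℤ) := by
    exact_mod_cast hC
  have e2 : ((RD.filter P).card : ℤ)
      = ((RA.filter fun u => ∀ i, u i ∈ X ∩ A).card : ℤ)
        + 3 * (((RB \ RA).filter fun t => S t ⊆ X).card : ℤ) := by
    exact_mod_cast hD
  constructor
  · linarith
  · linarith
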